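/- arXiv:1912.10933 — 5 statements merged into one kernel-verified Lean document; each statement's English description precedes it below -/
import Mathlib

section
/- For u in H^{1/2}_+(𝕋), Tr(K_u²) = M(u), where K_u := H_{S*u} is the shifted Hankel operator and S* the adjoint shift; consequently ‖u‖²_{L²} = Tr(H_u²) − Tr(K_u²). -/
open Finset

lemma core_pair_sum (f : ℕ → ℝ) (hf0 : ∀ n, 0 ≤ f n)
    (h : Summable fun n : ℕ => ((n : ℝ) + 1) * f n) :
    Summable (fun q : ℕ × ℕ => f (q.1 + q.2)) ∧
    (∑' q : ℕ × ℕ, f (q.1 + q.2)) = ∑' n : ℕ, ((n : ℝ) + 1) * f n := by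
  set e := Finset.HasAntidiagonal.sigmaAntidiagonalEquivProd (A := ℕ) with he
  have hcomp : ∀ p : (Σ n : ℕ, antidiagonal n),
      f ((e p).1 + (e p).2) = f p.1 := by
    rintro ⟨n, ⟨k, l⟩, hm⟩
    rw [Finset.HasAntidiagonal.mem_antidiagonal] at hm
    simp [he, Finset.HasAntidiagonal.sigmaAntidiagonalEquivProd, hm]
  have hfiber : ∀ n : ℕ,
      (∑' x : antidiagonal n, f ((e ⟨n, x⟩).1 + (e ⟨n, x⟩).2)) = ((n : ℝ) + 1) * f n := by
    intro n
    have : ∀ x : (antidiagonal n : Finset (ℕ × ℕ)), f ((e ⟨n, x⟩).1 + (e ⟨n, x⟩).2) = f n := by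
      intro x; exact hcomp ⟨n, x⟩
    rw [tsum_congr this, tsum_fintype]
    simp only [Finset.sum_const, Finset.card_univ, Fintype.card_coe, Nat.card_antidiagonal,
      nsmul_eq_mul]
    push_cast
    ring
  have hsig : Summable (fun p : (Σ n : ℕ, antidiagonal n) => f ((e p).1 + (e p).2)) := by
    rw [summable_sigma_of_nonneg (fun p => hf0 _)]
    constructor
    · intro n; exact Summable.of_finite
    · apply h.congr
      intro n; exact (hfiber n).symm
  have hsum : Summable (fun q : ℕ × ℕ => f (q.1 + q.2)) := by
    rw [← e.summable_iff]; exact hsig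
  refine ⟨hsum, ?_⟩
  rw [← e.tsum_eq (fun q : ℕ × ℕ => f (q.1 + q.2)), hsig.tsum_sigma' (fun n => Summable.of_finite)]
  exact tsum_congr hfiber

/-- For `u ∈ H^{1/2}_+`, identified with its Fourier coefficients `u : ℕ → ℂ` with
`∑ (k+1)|û(k)|² < ∞`, the squared Hilbert–Schmidt norm of the shifted Hankel operator
`K_u = H_{S*u}` (with matrix entries `û(j+k+1)`) equals the momentum `M(u)`;
consequently `‖u‖²_{L²} = Tr(H_u²) − Tr(K_u²)`. -/
theorem stmt2 (u : ℕ → ℂ)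
    (hu : Summable (fun k : ℕ => ((k : ℝ) + 1) * ‖u k‖ ^ 2)) :
    (∑' q : ℕ × ℕ, ‖u (q.1 + q.2 + 1)‖ ^ 2) = ∑' k : ℕ, (k : ℝ) * ‖u k‖ ^ 2 ∧
    (∑' k : ℕ, ‖u k‖ ^ 2) =
      (∑' q : ℕ × ℕ, ‖u (q.1 + q.2)‖ ^ 2) - ∑' q : ℕ × ℕ, ‖u (q.1 + q.2 + 1)‖ ^ 2 := by
  have husq : Summable (fun k : ℕ => ‖u k‖ ^ 2) := by
    apply Summable.of_nonneg_of_le (fun k => by positivity) (fun k => ?_) hu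
    nlinarith [sq_nonneg ‖u k‖, Nat.cast_nonneg (α := ℝ) k]
  have hM : Summable (fun k : ℕ => (k : ℝ) * ‖u k‖ ^ 2) := by
    apply Summable.of_nonneg_of_le (fun k => by positivity) (fun k => ?_) hu
    nlinarith [sq_nonneg ‖u k‖]
  have hshift : Summable (fun n : ℕ => ((n : ℝ) + 1) * ‖u (n + 1)‖ ^ 2) := by
    have h1 : Summable (fun n : ℕ => ((n : ℝ) + 1 + 1) * ‖u (n + 1)‖ ^ 2) := by
      have := (summable_nat_add_iff 1).mpr hu
      apply this.congr; intro n; push_cast; ring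
    apply Summable.of_nonneg_of_le (fun k => by positivity) (fun k => ?_) h1
    nlinarith [sq_nonneg ‖u (k + 1)‖, Nat.cast_nonneg (α := ℝ) k]
  obtain ⟨hs1, ht1⟩ := core_pair_sum (fun n => ‖u (n + 1)‖ ^ 2) (fun n => by positivity) hshift
  obtain ⟨hs0, ht0⟩ := core_pair_sum (fun n => ‖u n‖ ^ 2) (fun n => by positivity) hu
  have key1 : (∑' q : ℕ × ℕ, ‖u (q.1 + q.2 + 1)‖ ^ 2) = ∑' k : ℕ, (k : ℝ) * ‖u k‖ ^ 2 := by
    rw [ht1, hM.tsum_eq_zero_add]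
    push_cast
    simp
  refine ⟨key1, ?_⟩
  have hA : (∑' k : ℕ, ((k : ℝ) + 1) * ‖u k‖ ^ 2)
      = (∑' k : ℕ, (k : ℝ) * ‖u k‖ ^ 2) + ∑' k : ℕ, ‖u k‖ ^ 2 := by
    rw [← hM.tsum_add husq]
    apply tsum_congr; intro k; ring
  rw [key1, ht0]
  linarith
end

section
/- For u ∈ L²_+(𝕋), the operators satisfy K_u² = H_u² − (·|u)u, i.e. for every f ∈ L²_+, K_u²(f) = H_u²(f) − (f|u)·u (where (f|u) denotes the L² inner product). -/
open scoped ComplexConjugate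

/-- The Hankel operator `H_u` in Fourier coefficients: `(H_u f)(n) = ∑_k û(n+k) conj(f̂(k))`. -/
noncomputable def hankelOp (u : ℕ → ℂ) (f : ℕ → ℂ) : ℕ → ℂ :=
  fun n => ∑' k : ℕ, u (n + k) * conj (f k)

/-- The shifted Hankel operator `K_u = H_{S*u}`: `(K_u f)(n) = ∑_k û(n+k+1) conj(f̂(k))`. -/
noncomputable def shiftedHankelOp (u : ℕ → ℂ) (f : ℕ → ℂ) : ℕ → ℂ :=
  fun n => ∑' k : ℕ, u (n + k + 1) * conj (f k)

lemma summable_antidiag {w : ℕ → ℝ} (hw : ∀ n, 0 ≤ w n)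
    (h : Summable fun n : ℕ => ((n : ℝ) + 1) * w n) :
    Summable fun p : ℕ × ℕ => w (p.1 + p.2) := by
  rw [← Finset.HasAntidiagonal.sigmaAntidiagonalEquivProd.summable_iff]
  have heq : (fun x : Σ n : ℕ, Finset.HasAntidiagonal.antidiagonal n =>
      w ((Finset.HasAntidiagonal.sigmaAntidiagonalEquivProd x).1 + (Finset.HasAntidiagonal.sigmaAntidiagonalEquivProd x).2))
      = fun x => w x.1 := by
    funext x
    obtain ⟨n, p, hp⟩ := x
    rw [Finset.HasAntidiagonal.mem_antidiagonal] at hp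
    simp [Finset.HasAntidiagonal.sigmaAntidiagonalEquivProd, hp]
  show Summable (fun x : Σ n : ℕ, Finset.HasAntidiagonal.antidiagonal n =>
      w ((Finset.HasAntidiagonal.sigmaAntidiagonalEquivProd x).1 + (Finset.HasAntidiagonal.sigmaAntidiagonalEquivProd x).2))
  rw [heq]
  apply (summable_sigma_of_nonneg (fun x => hw _)).mpr
  constructor
  · intro n; exact Summable.of_finite
  · have : (fun n : ℕ => ∑' _ : (Finset.HasAntidiagonal.antidiagonal n : Finset (ℕ × ℕ)), w n)
        = fun n : ℕ => ((n : ℝ) + 1) * w n := by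
      funext n
      rw [tsum_const, Nat.card_eq_fintype_card, Fintype.card_coe,
        Finset.Nat.card_antidiagonal, nsmul_eq_mul]
      push_cast; ring
    rw [this]; exact h

set_option maxHeartbeats 800000 in
/-- For `u ∈ H^{1/2}_+` and every `f ∈ L²_+`, one has
`K_u²(f) = H_u²(f) − (f|u)·u`, where `(f|u) = ∑ f̂(k) conj(û(k))`. -/
theorem stmt3 (u f : ℕ → ℂ)
    (hu : Summable (fun k : ℕ => ((k : ℝ) + 1) * ‖u k‖ ^ 2))
    (hf : Summable (fun k : ℕ => ‖f k‖ ^ 2)) :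
    ∀ n : ℕ,
      shiftedHankelOp u (shiftedHankelOp u f) n =
        hankelOp u (hankelOp u f) n - (∑' k : ℕ, f k * conj (u k)) * u n := by
  intro n
  have hu2 : Summable (fun k : ℕ => ‖u k‖ ^ 2) := by
    refine hu.of_nonneg_of_le (fun k => by positivity) (fun k => ?_)
    nlinarith [sq_nonneg ‖u k‖, Nat.cast_nonneg (α := ℝ) k]
  -- norm summability on the product
  have hF : Summable (fun p : ℕ × ℕ => ‖u (n + p.1)‖ * (‖u (p.1 + p.2)‖ * ‖f p.2‖)) := by
    have h1 : Summable (fun p : ℕ × ℕ => ‖u (n + p.1)‖ ^ 2 * ‖f p.2‖ ^ 2) := by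
      have hun : Summable (fun k : ℕ => ‖u (n + k)‖ ^ 2) :=
        hu2.comp_injective (add_right_injective n)
      exact hun.mul_of_nonneg hf (fun k => by positivity) (fun k => by positivity)
    have h2 : Summable (fun p : ℕ × ℕ => ‖u (p.1 + p.2)‖ ^ 2) :=
      summable_antidiag (fun m => by positivity) hu
    refine ((h1.add h2).div_const 2).of_nonneg_of_le
      (fun p => by positivity) (fun p => ?_)
    nlinarith [sq_nonneg (‖u (n + p.1)‖ * ‖f p.2‖ - ‖u (p.1 + p.2)‖),
      mul_nonneg (norm_nonneg (u (n + p.1))) (norm_nonneg (f p.2)),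
      norm_nonneg (u (p.1 + p.2))]
  set A : ℕ × ℕ → ℂ := fun p => u (n + p.1) * (conj (u (p.1 + p.2)) * f p.2) with hAdef
  have hA : Summable A := by
    refine hF.of_norm_bounded (fun p => ?_)
    simp [hAdef, norm_mul]
  set g : ℕ → ℂ := fun k => ∑' j, A (k, j) with hgdef
  have hg : Summable g :=
    ⟨∑' p, A p, hA.hasSum.prod_fiberwise (fun k => (hA.prod_factor k).hasSum)⟩
  have conjtsum : ∀ (c : ℕ → ℂ), conj (∑' j, c j) = ∑' j, conj (c j) := by
    intro c
    simp only [starRingEnd_apply]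
    exact tsum_star
  have hH : hankelOp u (hankelOp u f) n = ∑' k, g k := by
    refine tsum_congr (fun k => ?_)
    rw [hankelOp, conjtsum, ← tsum_mul_left]
    refine tsum_congr (fun j => ?_)
    simp [hAdef, map_mul]
  have hK : shiftedHankelOp u (shiftedHankelOp u f) n = ∑' k, g (k + 1) := by
    refine tsum_congr (fun k => ?_)
    rw [shiftedHankelOp, conjtsum, ← tsum_mul_left]
    refine tsum_congr (fun j => ?_)
    have e1 : k + 1 + j = k + j + 1 := by omega
    have e2 : n + (k + 1) = n + k + 1 := by omega
    simp [hAdef, e1, e2, map_mul]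
  have hg0 : g 0 = (∑' k : ℕ, f k * conj (u k)) * u n := by
    have : g 0 = ∑' j, u n * (conj (u j) * f j) := by
      refine tsum_congr (fun j => ?_)
      simp [hAdef]
    rw [this, tsum_mul_left, mul_comm]
    congr 1
    exact tsum_congr (fun j => mul_comm _ _)
  rw [hK, hH, ← hg0]
  have := hg.tsum_eq_zero_add
  rw [this]
  ring
end

section
/- Fix c ∈ ℂ, c ≠ 0, and s > 1/2. For functions u_p(x) = c e^{ix}/(1 − p e^{ix}) with |p| < 1, as |p| → 1⁻, ‖u_p‖²_{H^s} ∼ Γ(2s+1) |c|²/(1−|p|²)^{2s+1}, i.e. the ratio of ‖u_p‖²_{H^s} to Γ(2s+1)|c|²(1−|p|²)^{−(2s+1)} tends to 1. -/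
open Filter

open Real Set MeasureTheory
open scoped Topology ENNReal NNReal

noncomputable def bCoef (b : ℝ) (k : ℕ) : ℝ := Real.Gamma (k + b) / (Nat.factorial k : ℝ)

lemma bCoef_pos {b : ℝ} (hb : 0 < b) (k : ℕ) : 0 < bCoef b k :=
  div_pos (Real.Gamma_pos_of_pos (by positivity)) (by positivity)

lemma bCoef_succ {b : ℝ} (hb : 0 < b) (k : ℕ) :
    bCoef b (k + 1) = bCoef b k * ((b + k) / (k + 1)) := by
  unfold bCoef
  have h1 : ((k + 1 : ℕ) : ℝ) + b = ((k : ℝ) + b) + 1 := by push_cast; ring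
  rw [h1, Real.Gamma_add_one (by positivity), Nat.factorial_succ]
  have h2 : ((k : ℝ) + 1) ≠ 0 := by positivity
  have h3 : ((Nat.factorial k : ℝ)) ≠ 0 := by positivity
  push_cast
  field_simp
  ring

lemma tendsto_ratio (b : ℝ) : Tendsto (fun k : ℕ => (b + k) / ((k : ℝ) + 1)) atTop (𝓝 1) := by
  have h2 : Tendsto (fun k : ℕ => 1 + (b - 1) * (1 / ((k : ℝ) + 1))) atTop (𝓝 (1 + (b - 1) * 0)) :=
    tendsto_const_nhds.add (tendsto_const_nhds.mul tendsto_one_div_add_atTop_nhds_zero_nat)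
  have h : ∀ k : ℕ, 1 + (b - 1) * (1 / ((k : ℝ) + 1)) = (b + k) / ((k : ℝ) + 1) := by
    intro k
    have : ((k : ℝ) + 1) ≠ 0 := by positivity
    field_simp
    ring
  exact Tendsto.congr h (by simpa using h2)

lemma summable_geom_of_ratio {c : ℕ → ℝ} (hc : ∀ k, 0 < c k)
    (hr : Tendsto (fun k => c (k + 1) / c k) atTop (𝓝 1)) {q : ℝ} (hq0 : 0 < q) (hq1 : q < 1) :
    Summable fun k => c k * q ^ k := by
  apply summable_of_ratio_test_tendsto_lt_one hq1 (Eventually.of_forall fun k => (mul_pos (hc k) (pow_pos hq0 k)).ne')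
  have h : ∀ k : ℕ, ‖c (k + 1) * q ^ (k + 1)‖ / ‖c k * q ^ k‖ = c (k + 1) / c k * q := by
    intro k
    rw [Real.norm_eq_abs, Real.norm_eq_abs, abs_of_pos (mul_pos (hc (k+1)) (pow_pos hq0 (k+1))), abs_of_pos (mul_pos (hc k) (pow_pos hq0 k)),
      pow_succ]
    have h1 : c k ≠ 0 := (hc k).ne'
    have h2 : q ^ k ≠ 0 := by positivity
    field_simp
  have := hr.mul (tendsto_const_nhds (x := q))
  rw [one_mul] at this
  exact Tendsto.congr (fun k => (h k).symm) this

lemma bCoef_tsum {b : ℝ} (hb : 0 < b) {q : ℝ} (hq0 : 0 ≤ q) (hq1 : q < 1)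
    (hsum : Summable fun k => bCoef b k * q ^ k) :
    ∑' k : ℕ, bCoef b k * q ^ k = Real.Gamma b * (1 - q) ^ (-b) := by
  set r : ℝ := 1 - q with hr_def
  have hr : 0 < r := by simp [hr_def]; linarith
  set f : ℕ → ℝ → ℝ := fun k t => (q ^ k / (Nat.factorial k : ℝ)) * (Real.exp (-t) * t ^ ((k : ℝ) + b - 1)) with hf_def
  have hint : ∀ k : ℕ, IntegrableOn (f k) (Ioi 0) :=
    fun k => (Real.GammaIntegral_convergent (by positivity)).const_mul _
  have hval : ∀ k : ℕ, ∫ t in Ioi 0, f k t = bCoef b k * q ^ k := by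
    intro k
    rw [hf_def]
    simp only []
    rw [MeasureTheory.integral_const_mul, ← Real.Gamma_eq_integral (by positivity : (0:ℝ) < (k:ℝ) + b)]
    rw [bCoef]
    ring
  have hmeas : ∀ k : ℕ, AEStronglyMeasurable (f k) (volume.restrict (Ioi 0)) :=
    fun k => (hint k).aestronglyMeasurable
  have hnonneg : ∀ k : ℕ, ∀ t ∈ Ioi (0:ℝ), 0 ≤ f k t := by
    intro k t ht
    have ht' : (0:ℝ) < t := ht
    have : (0:ℝ) ≤ t ^ ((k : ℝ) + b - 1) := (Real.rpow_pos_of_pos ht' _).le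
    positivity
  have hfin : ∑' k : ℕ, ∫⁻ t in Ioi 0, ‖f k t‖₊ ≠ ⊤ := by
    have heq : ∀ k : ℕ, ∫⁻ t in Ioi 0, (‖f k t‖₊ : ℝ≥0∞) = ENNReal.ofReal (bCoef b k * q ^ k) := by
      intro k
      calc ∫⁻ t in Ioi 0, (‖f k t‖₊ : ℝ≥0∞) = ∫⁻ t in Ioi 0, ENNReal.ofReal (f k t) :=
            lintegral_congr_ae ((ae_restrict_iff' measurableSet_Ioi).2
              (Eventually.of_forall fun t ht => Real.enorm_eq_ofReal (hnonneg k t ht)))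
        _ = ENNReal.ofReal (∫ t in Ioi 0, f k t) :=
            (MeasureTheory.ofReal_integral_eq_lintegral_ofReal (hint k)
              ((ae_restrict_iff' measurableSet_Ioi).2 (Eventually.of_forall (hnonneg k)))).symm
        _ = ENNReal.ofReal (bCoef b k * q ^ k) := by rw [hval k]
    simp_rw [heq]
    rw [← ENNReal.ofReal_tsum_of_nonneg (fun k => (mul_nonneg (bCoef_pos hb k).le (pow_nonneg hq0 k))) hsum]
    exact ENNReal.ofReal_ne_top
  have hswap := MeasureTheory.integral_tsum hmeas hfin
  have hptw : ∀ t ∈ Ioi (0:ℝ), ∑' k : ℕ, f k t = t ^ (b - 1) * Real.exp (-(r * t)) := by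
    intro t ht
    have ht' : (0:ℝ) < t := ht
    have h1 : ∀ k : ℕ, f k t = (t ^ (b - 1) * Real.exp (-t)) * ((q * t) ^ k / (Nat.factorial k : ℝ)) := by
      intro k
      rw [hf_def]
      simp only []
      have : t ^ ((k : ℝ) + b - 1) = t ^ (k : ℕ) * t ^ (b - 1) := by
        rw [← Real.rpow_natCast t k, ← Real.rpow_add ht']
        ring_nf
      rw [this, mul_pow]
      ring
    rw [tsum_congr h1, tsum_mul_left]
    have hexp : ∑' k : ℕ, ((q * t) ^ k / (Nat.factorial k : ℝ)) = Real.exp (q * t) := by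
      rw [Real.exp_eq_exp_ℝ, NormedSpace.exp_eq_tsum_div]
    rw [hexp, mul_assoc, ← Real.exp_add]
    congr 2
    rw [hr_def]
    ring
  calc ∑' k : ℕ, bCoef b k * q ^ k = ∑' k : ℕ, ∫ t in Ioi 0, f k t := by
        exact (tsum_congr fun k => (hval k).symm)
    _ = ∫ t in Ioi 0, ∑' k : ℕ, f k t := hswap.symm
    _ = ∫ t in Ioi 0, t ^ (b - 1) * Real.exp (-(r * t)) :=
        MeasureTheory.setIntegral_congr_fun measurableSet_Ioi (fun t ht => hptw t ht)
    _ = (1 / r) ^ b * Real.Gamma b := Real.integral_rpow_mul_exp_neg_mul_Ioi hb hr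
    _ = Real.Gamma b * (1 - q) ^ (-b) := by
        rw [one_div, Real.inv_rpow hr.le, ← Real.rpow_neg hr.le, mul_comm]

lemma Gamma_nat_add {b : ℝ} (hb : 0 < b) (m : ℕ) :
    Real.Gamma ((m : ℝ) + b) = Real.Gamma b * ∏ j ∈ Finset.range m, (b + j) := by
  induction m with
  | zero => simp
  | succ m ih =>
    have h1 : ((m + 1 : ℕ) : ℝ) + b = ((m : ℝ) + b) + 1 := by push_cast; ring
    rw [h1, Real.Gamma_add_one (by positivity), ih, Finset.prod_range_succ]
    ring

lemma GammaSeq_pos {b : ℝ} (hb : 0 < b) {k : ℕ} (hk : 0 < k) : 0 < Real.GammaSeq b k := by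
  rw [Real.GammaSeq]
  have hk' : (0 : ℝ) < (k : ℝ) := by exact_mod_cast hk
  have h1 : (0:ℝ) < ∏ j ∈ Finset.range (k + 1), (b + j) :=
    Finset.prod_pos fun j _ => by positivity
  positivity

lemma bCoef_eq_gammaSeq {b : ℝ} (hb : 0 < b) {k : ℕ} (hk : 0 < k) :
    bCoef b k = Real.Gamma b * (k : ℝ) ^ b / (Real.GammaSeq b k * (b + k)) := by
  have hk' : (0 : ℝ) < (k : ℝ) := by exact_mod_cast hk
  have hP : (0:ℝ) < ∏ j ∈ Finset.range k, (b + j) := Finset.prod_pos fun j _ => by positivity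
  have hfac : (0:ℝ) < (Nat.factorial k : ℝ) := by positivity
  have hgs : Real.GammaSeq b k = (k:ℝ) ^ b * (Nat.factorial k : ℝ) /
      ((∏ j ∈ Finset.range k, (b + j)) * (b + k)) := by
    rw [Real.GammaSeq, Finset.prod_range_succ]
  rw [bCoef, Gamma_nat_add hb k, hgs]
  have h1 : (k:ℝ) ^ b ≠ 0 := (Real.rpow_pos_of_pos hk' b).ne'
  have h2 : b + (k:ℝ) ≠ 0 := by positivity
  field_simp

lemma tendsto_A_div_bCoef (s : ℝ) (hb : 0 < 2 * s + 1) :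
    Tendsto (fun k : ℕ => (1 + ((k : ℝ) + 1) ^ 2) ^ s / bCoef (2 * s + 1) k) atTop (𝓝 1) := by
  set b := 2 * s + 1 with hb_def
  have hΓ : 0 < Real.Gamma b := Real.Gamma_pos_of_pos hb
  -- inner ratio tends to 1
  have hu : Tendsto (fun k : ℕ => 1 / (k : ℝ)) atTop (𝓝 0) := tendsto_one_div_atTop_nhds_zero_nat
  have hinner : Tendsto (fun k : ℕ => (1 + ((k : ℝ) + 1) ^ 2) / (k : ℝ) ^ 2) atTop (𝓝 1) := by
    have h2 : Tendsto (fun k : ℕ => (1 / (k:ℝ)) ^ 2 + (1 + 1 / (k:ℝ)) ^ 2) atTop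
        (𝓝 ((0:ℝ) ^ 2 + (1 + 0) ^ 2)) := (hu.pow 2).add ((tendsto_const_nhds.add hu).pow 2)
    have h3 : ∀ᶠ k : ℕ in atTop, (1 / (k:ℝ)) ^ 2 + (1 + 1 / (k:ℝ)) ^ 2
        = (1 + ((k : ℝ) + 1) ^ 2) / (k : ℝ) ^ 2 := by
      filter_upwards [eventually_ge_atTop 1] with k hk
      have hk' : (0:ℝ) < (k:ℝ) := by exact_mod_cast hk
      field_simp
      all_goals ring
    refine (h2.congr' h3).mono_right ?_
    simp
  have hT1 : Tendsto (fun k : ℕ => ((1 + ((k : ℝ) + 1) ^ 2) / (k : ℝ) ^ 2) ^ s) atTop (𝓝 1) := by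
    have hc : ContinuousAt (fun x : ℝ => x ^ s) 1 :=
      Real.continuousAt_rpow_const 1 s (Or.inl one_ne_zero)
    have := hc.tendsto.comp hinner
    simpa [Real.one_rpow, Function.comp_def] using this
  have hT2 : Tendsto (fun k : ℕ => (b + (k:ℝ)) / (k : ℝ)) atTop (𝓝 1) := by
    have h2 : Tendsto (fun k : ℕ => 1 + b * (1 / (k:ℝ))) atTop (𝓝 (1 + b * 0)) :=
      tendsto_const_nhds.add (tendsto_const_nhds.mul hu)
    have h3 : ∀ᶠ k : ℕ in atTop, 1 + b * (1 / (k:ℝ)) = (b + (k:ℝ)) / (k : ℝ) := by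
      filter_upwards [eventually_ge_atTop 1] with k hk
      have hk' : (0:ℝ) < (k:ℝ) := by exact_mod_cast hk
      field_simp
      ring
    refine (h2.congr' h3).mono_right ?_
    simp
  have hT3 : Tendsto (fun k : ℕ => Real.GammaSeq b k / Real.Gamma b) atTop (𝓝 1) := by
    have := (Real.GammaSeq_tendsto_Gamma b).div_const (Real.Gamma b)
    rwa [div_self hΓ.ne'] at this
  have hprod := (hT1.mul hT2).mul hT3
  rw [show (1:ℝ) * 1 * 1 = 1 by ring] at hprod
  refine Tendsto.congr' ?_ hprod
  filter_upwards [eventually_ge_atTop 1] with k hk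
  have hk0 : 0 < k := hk
  have hk' : (0:ℝ) < (k:ℝ) := by exact_mod_cast hk
  have hgs := GammaSeq_pos hb hk0
  have hkb : (k:ℝ) ^ b = ((k:ℝ) ^ 2) ^ s * (k:ℝ) := by
    rw [hb_def, show (2*s+1 : ℝ) = 2*s + 1 from rfl, Real.rpow_add hk', Real.rpow_one,
      show ((k:ℝ)^2) = (k:ℝ) ^ (2:ℕ) from rfl, ← Real.rpow_natCast (k:ℝ) 2,
      ← Real.rpow_mul hk'.le]
    all_goals norm_num
    all_goals rw [mul_comm]
  rw [bCoef_eq_gammaSeq hb hk0, Real.div_rpow (by positivity) (by positivity), hkb]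
  have h1 : ((k:ℝ) ^ 2) ^ s ≠ 0 := (Real.rpow_pos_of_pos (by positivity) s).ne'
  have h2 : b + (k:ℝ) ≠ 0 := by positivity
  field_simp

lemma summable_of_eventually_le {f g : ℕ → ℝ} (hf : ∀ k, 0 ≤ f k)
    (h : ∀ᶠ k in atTop, f k ≤ g k) (hg : Summable g) : Summable f := by
  obtain ⟨N, hN⟩ := eventually_atTop.1 h
  rw [← summable_nat_add_iff N]
  exact Summable.of_nonneg_of_le (fun k => hf _) (fun k => hN _ (Nat.le_add_left N k))
    ((summable_nat_add_iff N).2 hg)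

lemma bCoef_ratio_tendsto {b : ℝ} (hb : 0 < b) :
    Tendsto (fun k : ℕ => bCoef b (k + 1) / bCoef b k) atTop (𝓝 1) := by
  refine (tendsto_ratio b).congr fun k => ?_
  rw [bCoef_succ hb k, mul_comm, mul_div_assoc, div_self (bCoef_pos hb k).ne', mul_one]

set_option maxHeartbeats 800000 in
lemma main_limit (s : ℝ) (hs : 1 / 2 < s) :
    Tendsto (fun q : ℝ => (∑' k : ℕ, (1 + ((k : ℝ) + 1) ^ 2) ^ s * q ^ k) * (1 - q) ^ (2 * s + 1)
      / Real.Gamma (2 * s + 1)) (𝓝[Ico (0:ℝ) 1] 1) (𝓝 1) := by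
  set b : ℝ := 2 * s + 1 with hb_def
  have hb : 0 < b := by rw [hb_def]; linarith
  have hΓ : 0 < Real.Gamma b := Real.Gamma_pos_of_pos hb
  set A : ℕ → ℝ := fun k => (1 + ((k : ℝ) + 1) ^ 2) ^ s with hA_def
  have hApos : ∀ k, 0 < A k := fun k => Real.rpow_pos_of_pos (by positivity) s
  have hAB : Tendsto (fun k : ℕ => A k / bCoef b k) atTop (𝓝 1) := tendsto_A_div_bCoef s hb
  rw [Metric.tendsto_nhds]
  intro ε hε
  set ε' : ℝ := ε / 2 with hε'_def
  have hε' : 0 < ε' := by positivity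
  have hevN : ∀ᶠ k : ℕ in atTop, |A k - bCoef b k| ≤ ε' * bCoef b k := by
    have h1 := hAB.eventually (Metric.closedBall_mem_nhds (1:ℝ) hε')
    filter_upwards [h1] with k hk
    have hB := bCoef_pos hb k
    have h2 : |A k / bCoef b k - 1| ≤ ε' := by
      simpa [Metric.mem_closedBall, Real.dist_eq] using hk
    calc |A k - bCoef b k| = |A k / bCoef b k - 1| * bCoef b k := by
          rw [← abs_of_pos hB, ← abs_mul]
          congr 1
          field_simp
          rw [abs_of_pos hB]; ring
      _ ≤ ε' * bCoef b k := mul_le_mul_of_nonneg_right h2 hB.le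
  obtain ⟨N, hN⟩ := eventually_atTop.1 hevN
  set D : ℝ := ∑ k ∈ Finset.range N, |A k - bCoef b k| with hD_def
  have hD0 : 0 ≤ D := Finset.sum_nonneg fun _ _ => abs_nonneg _
  have hsmall : ∀ᶠ q in 𝓝[Ico (0:ℝ) 1] 1, (1 - q) ^ b < ε' * Real.Gamma b / (D + 1) := by
    have h0 : Tendsto (fun q : ℝ => (1 - q) ^ b) (𝓝 1) (𝓝 0) := by
      have hc : ContinuousAt (fun x : ℝ => x ^ b) 0 :=
        Real.continuousAt_rpow_const 0 b (Or.inr hb.le)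
      have h1 : Tendsto (fun q : ℝ => 1 - q) (𝓝 (1:ℝ)) (𝓝 0) := by
        have : Continuous (fun q : ℝ => 1 - q) := continuous_const.sub continuous_id
        simpa using this.tendsto (1:ℝ)
      have := hc.tendsto.comp h1
      simpa [Real.zero_rpow hb.ne', Function.comp_def] using this
    exact (h0.mono_left nhdsWithin_le_nhds).eventually_lt_const (by positivity)
  have hhalf : ∀ᶠ q in 𝓝[Ico (0:ℝ) 1] 1, (1/2 : ℝ) < q :=
    eventually_nhdsWithin_of_eventually_nhds (eventually_gt_nhds (by norm_num))
  filter_upwards [hsmall, hhalf, eventually_mem_nhdsWithin] with q hqsmall hqhalf hqmem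
  obtain ⟨hq0, hq1⟩ := hqmem
  have hq0' : 0 < q := by linarith
  have h1q : 0 < 1 - q := by linarith
  have hBsum : Summable fun k => bCoef b k * q ^ k :=
    summable_geom_of_ratio (bCoef_pos hb) (bCoef_ratio_tendsto hb) hq0' hq1
  have hAsum : Summable fun k => A k * q ^ k := by
    refine summable_of_eventually_le (fun k => by positivity) ?_ (hBsum.mul_left 2)
    have hev2 := hAB.eventually (eventually_le_nhds (by norm_num : (1:ℝ) < 2))
    filter_upwards [hev2] with k hk
    have hB := bCoef_pos hb k
    have : A k ≤ 2 * bCoef b k := by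
      rw [div_le_iff₀ hB] at hk
      linarith
    calc A k * q ^ k ≤ (2 * bCoef b k) * q ^ k :=
          mul_le_mul_of_nonneg_right this (pow_nonneg hq0 k)
      _ = 2 * (bCoef b k * q ^ k) := by ring
  set SA : ℝ := ∑' k : ℕ, A k * q ^ k with hSA_def
  set SB : ℝ := ∑' k : ℕ, bCoef b k * q ^ k with hSB_def
  have hSb : SB = Real.Gamma b * (1 - q) ^ (-b) := bCoef_tsum hb hq0 hq1 hBsum
  have hpow : 0 < (1 - q) ^ b := Real.rpow_pos_of_pos h1q b
  have hSb_mul : SB * (1 - q) ^ b = Real.Gamma b := by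
    rw [hSb, mul_assoc, ← Real.rpow_add h1q, neg_add_cancel, Real.rpow_zero, mul_one]
  have hSB0 : 0 ≤ SB := tsum_nonneg fun k => mul_nonneg (bCoef_pos hb k).le (pow_nonneg hq0 k)
  -- difference bound
  set h : ℕ → ℝ := fun k => A k * q ^ k - bCoef b k * q ^ k with hh_def
  have hhsum : Summable h := hAsum.sub hBsum
  have hhabs : Summable fun k => |h k| := hhsum.abs
  have hdiff : SA - SB = ∑' k, h k := (hAsum.tsum_sub hBsum).symm
  have habs : |SA - SB| ≤ ∑' k, |h k| := by
    rw [hdiff]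
    calc |∑' k, h k| = ‖∑' k, h k‖ := (Real.norm_eq_abs _).symm
      _ ≤ ∑' k, ‖h k‖ := norm_tsum_le_tsum_norm (by simpa [Real.norm_eq_abs] using hhabs)
      _ = ∑' k, |h k| := by simp [Real.norm_eq_abs]
  have hsplit : ∑' k, |h k| = (∑ k ∈ Finset.range N, |h k|) + ∑' k, |h (k + N)| :=
    (hhabs.sum_add_tsum_nat_add N).symm
  have hhead : (∑ k ∈ Finset.range N, |h k|) ≤ D := by
    refine Finset.sum_le_sum fun k _ => ?_
    have : h k = (A k - bCoef b k) * q ^ k := by rw [hh_def]; ring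
    rw [this, abs_mul, abs_of_nonneg (pow_nonneg hq0 k)]
    calc |A k - bCoef b k| * q ^ k ≤ |A k - bCoef b k| * 1 :=
          mul_le_mul_of_nonneg_left (pow_le_one₀ hq0 hq1.le) (abs_nonneg _)
      _ = |A k - bCoef b k| := mul_one _
  have htail : ∑' k, |h (k + N)| ≤ ε' * SB := by
    have hle : ∀ k : ℕ, |h (k + N)| ≤ ε' * (bCoef b (k + N) * q ^ (k + N)) := by
      intro k
      have : h (k + N) = (A (k + N) - bCoef b (k + N)) * q ^ (k + N) := by rw [hh_def]; ring
      rw [this, abs_mul, abs_of_nonneg (pow_nonneg hq0 _)]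
      have := hN (k + N) (Nat.le_add_left N k)
      calc |A (k + N) - bCoef b (k + N)| * q ^ (k + N)
          ≤ (ε' * bCoef b (k + N)) * q ^ (k + N) :=
            mul_le_mul_of_nonneg_right this (pow_nonneg hq0 _)
        _ = ε' * (bCoef b (k + N) * q ^ (k + N)) := by ring
    have hsum2 : Summable fun k => ε' * (bCoef b (k + N) * q ^ (k + N)) :=
      ((summable_nat_add_iff N).2 hBsum).mul_left ε'
    calc ∑' k, |h (k + N)| ≤ ∑' k, ε' * (bCoef b (k + N) * q ^ (k + N)) :=
          ((summable_nat_add_iff N).2 hhabs).tsum_le_tsum hle hsum2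
      _ = ε' * ∑' k, bCoef b (k + N) * q ^ (k + N) := tsum_mul_left
      _ ≤ ε' * SB := by
          refine mul_le_mul_of_nonneg_left ?_ hε'.le
          have := hBsum.sum_add_tsum_nat_add N
          have hge : 0 ≤ ∑ k ∈ Finset.range N, bCoef b k * q ^ k :=
            Finset.sum_nonneg fun k _ => mul_nonneg (bCoef_pos hb k).le (pow_nonneg hq0 k)
          rw [hSB_def]
          linarith [this]
  have hbound : |SA - SB| ≤ D + ε' * SB := by
    calc |SA - SB| ≤ ∑' k, |h k| := habs
      _ = _ + _ := hsplit
      _ ≤ D + ε' * SB := add_le_add hhead htail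
  -- final computation
  have e1 : SA * (1 - q) ^ b / Real.Gamma b - 1 = (SA - SB) * ((1 - q) ^ b / Real.Gamma b) := by
    have h2 : SB * ((1 - q) ^ b / Real.Gamma b) = 1 := by
      rw [← mul_div_assoc, hSb_mul, div_self hΓ.ne']
    calc SA * (1 - q) ^ b / Real.Gamma b - 1
        = SA * ((1 - q) ^ b / Real.Gamma b) - SB * ((1 - q) ^ b / Real.Gamma b) := by
          rw [h2, mul_div_assoc]
      _ = (SA - SB) * ((1 - q) ^ b / Real.Gamma b) := by ring
  rw [Real.dist_eq, e1, abs_mul, abs_of_pos (div_pos hpow hΓ)]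
  have hqsmall' : (1 - q) ^ b * (D + 1) < ε' * Real.Gamma b := by
    rw [lt_div_iff₀ (by positivity : (0:ℝ) < D + 1)] at hqsmall
    linarith
  calc |SA - SB| * ((1 - q) ^ b / Real.Gamma b)
      ≤ (D + ε' * SB) * ((1 - q) ^ b / Real.Gamma b) :=
        mul_le_mul_of_nonneg_right hbound (by positivity)
    _ = D * ((1 - q) ^ b / Real.Gamma b) + ε' * (SB * (1 - q) ^ b) / Real.Gamma b := by ring
    _ = D * ((1 - q) ^ b / Real.Gamma b) + ε' := by
        rw [hSb_mul, mul_div_assoc, div_self hΓ.ne', mul_one]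
    _ < ε' + ε' := by
        have h6 : D * ((1 - q) ^ b / Real.Gamma b) < ε' := by
          rw [← mul_div_assoc, div_lt_iff₀ hΓ]
          nlinarith [hpow]
        linarith
    _ = ε := by rw [hε'_def]; ring

lemma summable_A (s : ℝ) (hs : 1 / 2 < s) {q : ℝ} (hq0 : 0 < q) (hq1 : q < 1) :
    Summable fun k : ℕ => (1 + ((k : ℝ) + 1) ^ 2) ^ s * q ^ k := by
  set b : ℝ := 2 * s + 1 with hb_def
  have hb : 0 < b := by rw [hb_def]; linarith
  have hBsum : Summable fun k => bCoef b k * q ^ k :=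
    summable_geom_of_ratio (bCoef_pos hb) (bCoef_ratio_tendsto hb) hq0 hq1
  have hAB : Tendsto (fun k : ℕ => (1 + ((k : ℝ) + 1) ^ 2) ^ s / bCoef b k) atTop (𝓝 1) :=
    tendsto_A_div_bCoef s hb
  refine summable_of_eventually_le (fun k => by positivity) ?_ (hBsum.mul_left 2)
  have hev2 := hAB.eventually (eventually_le_nhds (by norm_num : (1:ℝ) < 2))
  filter_upwards [hev2] with k hk
  have hB := bCoef_pos hb k
  have h3 : (1 + ((k : ℝ) + 1) ^ 2) ^ s ≤ 2 * bCoef b k := by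
    rw [div_le_iff₀ hB] at hk
    linarith
  calc (1 + ((k : ℝ) + 1) ^ 2) ^ s * q ^ k ≤ (2 * bCoef b k) * q ^ k :=
        mul_le_mul_of_nonneg_right h3 (pow_nonneg hq0.le k)
    _ = 2 * (bCoef b k * q ^ k) := by ring

/-- For fixed `c ≠ 0` and `s > 1/2`, with `u_p(x) = c e^{ix}/(1 − p e^{ix})`, as
`|p| → 1⁻` one has `‖u_p‖²_{H^s} ∼ Γ(2s+1)|c|²/(1−|p|²)^{2s+1}`: the ratio of the two
quantities tends to `1`. -/
theorem stmt12 (c : ℂ) (hc : c ≠ 0) (s : ℝ) (hs : 1 / 2 < s) :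
    Filter.Tendsto
      (fun p : ℂ =>
        (∑' k : ℕ, (1 + (k : ℝ) ^ 2) ^ s *
            ‖(if k = 0 then 0 else c * p ^ (k - 1) : ℂ)‖ ^ 2) /
          (Real.Gamma (2 * s + 1) * ‖c‖ ^ 2 * (1 - ‖p‖ ^ 2) ^ (-(2 * s + 1))))
      (Filter.comap (fun p : ℂ => ‖p‖) (nhdsWithin 1 (Set.Iio 1)))
      (nhds 1) := by
  have hmain := main_limit s hs
  set b : ℝ := 2 * s + 1 with hb_def
  have hb : 0 < b := by rw [hb_def]; linarith
  have hΓ : 0 < Real.Gamma b := Real.Gamma_pos_of_pos hb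
  set F := Filter.comap (fun p : ℂ => ‖p‖) (𝓝[Set.Iio (1:ℝ)] 1) with hF
  have hnorm : Tendsto (fun p : ℂ => ‖p‖) F (𝓝[Iio (1:ℝ)] 1) := tendsto_comap
  have hev : ∀ᶠ p : ℂ in F, ‖p‖ ∈ Ioo (1/2 : ℝ) 1 :=
    hnorm.eventually (Ioo_mem_nhdsLT (by norm_num))
  have hq : Tendsto (fun p : ℂ => ‖p‖ ^ 2) F (𝓝[Ico (0:ℝ) 1] 1) := by
    rw [tendsto_nhdsWithin_iff]
    constructor
    · have h1 : Tendsto (fun p : ℂ => ‖p‖) F (𝓝 1) := hnorm.mono_right nhdsWithin_le_nhds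
      have := h1.pow 2
      simpa using this
    · filter_upwards [hev] with p hp
      exact ⟨by positivity, pow_lt_one₀ (norm_nonneg p) hp.2 two_ne_zero⟩
  have hcomp := hmain.comp hq
  refine Tendsto.congr' ?_ hcomp
  filter_upwards [hev] with p hp
  obtain ⟨hp1, hp2⟩ := hp
  set q : ℝ := ‖p‖ ^ 2 with hq_def
  have hq0 : 0 < q := by positivity
  have hq1 : q < 1 := pow_lt_one₀ (norm_nonneg p) hp2 two_ne_zero
  have h1q : 0 < 1 - q := by linarith
  set A : ℕ → ℝ := fun k => (1 + ((k : ℝ) + 1) ^ 2) ^ s with hA_def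
  have hterm : ∀ j : ℕ,
      (1 + ((j + 1 : ℕ) : ℝ) ^ 2) ^ s * ‖(if (j + 1 : ℕ) = 0 then 0 else c * p ^ ((j + 1) - 1) : ℂ)‖ ^ 2
        = ‖c‖ ^ 2 * (A j * q ^ j) := by
    intro j
    rw [if_neg (Nat.succ_ne_zero j), Nat.add_sub_cancel, norm_mul, norm_pow]
    rw [hA_def, hq_def]
    push_cast
    ring
  have hAsum : Summable fun j : ℕ => A j * q ^ j := summable_A s hs hq0 hq1
  have hsum1 : Summable fun j : ℕ => ‖c‖ ^ 2 * (A j * q ^ j) := hAsum.mul_left _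
  have hsumfull : Summable fun k : ℕ =>
      (1 + (k : ℝ) ^ 2) ^ s * ‖(if k = 0 then 0 else c * p ^ (k - 1) : ℂ)‖ ^ 2 :=
    (summable_nat_add_iff 1).1 (hsum1.congr fun j => (hterm j).symm)
  have hts : (∑' k : ℕ, (1 + (k : ℝ) ^ 2) ^ s * ‖(if k = 0 then 0 else c * p ^ (k - 1) : ℂ)‖ ^ 2)
      = ‖c‖ ^ 2 * ∑' j : ℕ, A j * q ^ j := by
    rw [hsumfull.tsum_eq_zero_add]
    simp only [if_pos rfl, norm_zero]
    rw [tsum_congr (fun j => hterm j), tsum_mul_left]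
    norm_num
  show _ = _
  rw [Function.comp_apply, hts]
  have hneg : (1 - q) ^ (-b) = ((1 - q) ^ b)⁻¹ := Real.rpow_neg h1q.le b
  have hpow : 0 < (1 - q) ^ b := Real.rpow_pos_of_pos h1q b
  have hcnorm : ‖c‖ ≠ 0 := norm_ne_zero_iff.2 hc
  rw [hneg]
  simp only [hA_def, hq_def]
  have habs0 : ‖c‖ ≠ 0 := by
    simpa using hcnorm
  field_simp [hΓ.ne', habs0]
end

section
/- Let κ > 0 and let γ : [0,∞) → (0,∞) be continuous, square-integrable, satisfying γ(t) = (1/κ)(∫_t^∞ γ(s)² ds)(1 + o(1)) as t → ∞. Then ∫_t^∞ γ(s)² ds = κ²/t · (1+o(1)) and γ(t) = κ/t · (1+o(1)) as t → +∞. -/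
open Filter MeasureTheory

/-- Key calculus lemma: if `f` has derivative `f'` on `Ici T` and `f' → c` at top,
then `f t / t → c`. -/
lemma tendsto_div_atTop_of_deriv {f f' : ℝ → ℝ} {c : ℝ}
    (hderiv : ∀ᶠ x in atTop, HasDerivAt f (f' x) x)
    (hlim : Tendsto f' atTop (nhds c)) :
    Tendsto (fun t => f t / t) atTop (nhds c) := by
  rw [Metric.tendsto_nhds]
  intro ε hε
  -- choose T with |f' s - c| ≤ ε/2 for s ≥ T and derivative exists there
  obtain ⟨T, hT⟩ : ∃ T : ℝ, 0 < T ∧ ∀ s ≥ T, HasDerivAt f (f' s) s ∧ |f' s - c| ≤ ε / 2 := by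
    have h1 := hderiv.and ((Metric.tendsto_nhds.1 hlim (ε/2) (by positivity)).mono
      (fun s hs => hs.le))
    rw [eventually_atTop] at h1
    obtain ⟨T0, hT0⟩ := h1
    exact ⟨max T0 1, lt_of_lt_of_le one_pos (le_max_right _ _),
      fun s hs => by
        have := hT0 s (le_trans (le_max_left _ _) hs)
        exact ⟨this.1, by simpa [Real.dist_eq] using this.2⟩⟩
  obtain ⟨hTpos, hT⟩ := hT
  -- MVT bound: for t ≥ T, |(f t - c*t) - (f T - c*T)| ≤ (ε/2)(t - T)
  set g : ℝ → ℝ := fun s => f s - c * s with hg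
  have hgderiv : ∀ x ∈ Set.Ici T, HasDerivWithinAt g (f' x - c) (Set.Ici T) x := by
    intro x hx
    exact (((hT x hx).1).sub ((hasDerivAt_id x).const_mul c)).hasDerivWithinAt.congr_deriv
      (by ring)
  have key : ∀ t ≥ T, |g t - g T| ≤ ε / 2 * (t - T) := by
    intro t ht
    have := (convex_Ici T).norm_image_sub_le_of_norm_hasDerivWithin_le hgderiv
      (fun x hx => (hT x hx).2) (Set.self_mem_Ici) ht
    simpa [Real.norm_eq_abs, abs_of_nonneg (sub_nonneg.2 ht)] using this
  -- now conclude
  have hbig : ∀ᶠ t in atTop, dist (f t / t) c < ε := by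
    have hev : ∀ᶠ t in atTop, t ≥ T ∧ t > 0 ∧ |g T| / t < ε / 2 := by
      have h3 : Tendsto (fun t : ℝ => |g T| / t) atTop (nhds 0) :=
        tendsto_const_nhds.div_atTop tendsto_id
      filter_upwards [eventually_ge_atTop T, eventually_gt_atTop (0:ℝ),
        (h3.eventually (eventually_lt_nhds (show (0:ℝ) < ε/2 by positivity)))] with t h1 h2 h3
      exact ⟨h1, h2, h3⟩
    filter_upwards [hev] with t ⟨ht, htpos, hsmall⟩
    have h1 : |f t - c * t| ≤ |g T| + ε/2 * (t - T) := by
      have hk := key t ht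
      calc |f t - c * t| = |(g t - g T) + g T| := by simp only [hg]; ring_nf
        _ ≤ |g t - g T| + |g T| := abs_add_le _ _
        _ ≤ ε/2 * (t - T) + |g T| := by linarith
        _ = |g T| + ε/2 * (t - T) := by ring
    rw [Real.dist_eq]
    have heq : f t / t - c = (f t - c * t) / t := by field_simp
    rw [heq, abs_div, abs_of_pos htpos, div_lt_iff₀ htpos]
    have hsmall' : |g T| < ε/2 * t := (div_lt_iff₀ htpos).1 hsmall
    nlinarith [hε, hTpos]
  exact hbig

/-- If `γ > 0` is continuous and square-integrable on `[0,∞)` and satisfies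
`γ(t) = (1/κ)(∫_t^∞ γ² ds)(1+o(1))` as `t → ∞`, then `∫_t^∞ γ² ds = κ²/t (1+o(1))`
and `γ(t) = κ/t (1+o(1))`. -/
theorem stmt15 (κ : ℝ) (hκ : 0 < κ) (γ : ℝ → ℝ)
    (hcont : ContinuousOn γ (Set.Ici (0 : ℝ)))
    (hpos : ∀ t : ℝ, 0 ≤ t → 0 < γ t)
    (hL2 : MeasureTheory.IntegrableOn (fun t => γ t ^ 2) (Set.Ici (0 : ℝ)))
    (hyp : Filter.Tendsto (fun t : ℝ => κ * γ t / ∫ s in Set.Ioi t, γ s ^ 2)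
      Filter.atTop (nhds 1)) :
    Filter.Tendsto (fun t : ℝ => (∫ s in Set.Ioi t, γ s ^ 2) * t / κ ^ 2)
        Filter.atTop (nhds 1) ∧
    Filter.Tendsto (fun t : ℝ => γ t * t / κ) Filter.atTop (nhds 1) := by
  set Γ : ℝ → ℝ := fun t => ∫ s in Set.Ioi t, γ s ^ 2 with hΓdef
  -- integrability on subsets
  have hIntIoi : ∀ t : ℝ, 0 ≤ t → IntegrableOn (fun s => γ s ^ 2) (Set.Ioi t) := by
    intro t ht
    exact hL2.mono_set (fun x hx => le_trans ht (le_of_lt hx))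
  have hIntIoc : ∀ a b : ℝ, 0 ≤ a → IntegrableOn (fun s => γ s ^ 2) (Set.Ioc a b) := by
    intro a b ha
    exact hL2.mono_set (fun x hx => le_trans ha (le_of_lt hx.1))
  -- positivity of Γ
  have hΓpos : ∀ t : ℝ, 0 ≤ t → 0 < Γ t := by
    intro t ht
    have h1 : (0:ℝ) < ∫ s in t..(t+1), γ s ^ 2 := by
      apply intervalIntegral.intervalIntegral_pos_of_pos_on
        (intervalIntegrable_iff.2
          (by rw [Set.uIoc_of_le (by linarith : t ≤ t+1)]; exact hIntIoc t (t+1) ht))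
        (fun x hx => pow_pos (hpos x (le_trans ht hx.1.le)) 2) (by linarith)
    have h2 : (∫ s in t..(t+1), γ s ^ 2) ≤ Γ t := by
      rw [intervalIntegral.integral_of_le (by linarith : t ≤ t + 1)]
      apply setIntegral_mono_set (hIntIoi t ht)
      · filter_upwards with x using sq_nonneg _
      · exact HasSubset.Subset.eventuallyLE Set.Ioc_subset_Ioi_self
    linarith
  -- splitting identity
  have hsplit : ∀ u : ℝ, 0 ≤ u → Γ u = Γ 0 - ∫ s in (0:ℝ)..u, γ s ^ 2 := by
    intro u hu
    rw [intervalIntegral.integral_of_le hu]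
    have : Γ 0 = (∫ s in Set.Ioc 0 u, γ s ^ 2) + Γ u := by
      rw [hΓdef]
      simp only
      rw [← MeasureTheory.setIntegral_union Set.Ioc_disjoint_Ioi_same measurableSet_Ioi
        (hIntIoc 0 u le_rfl) (hIntIoi u hu), Set.Ioc_union_Ioi_eq_Ioi hu]
    linarith
  -- derivative of Γ
  have hΓderiv : ∀ t : ℝ, 0 < t → HasDerivAt Γ (-(γ t ^ 2)) t := by
    intro t ht
    have hmeas : StronglyMeasurableAtFilter (fun s => γ s ^ 2) (nhds t) :=
      ContinuousOn.stronglyMeasurableAtFilter isOpen_Ioi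
        (((hcont.mono (Set.Ioi_subset_Ici le_rfl)).pow 2)) t ht
    have hcontAt : ContinuousAt (fun s => γ s ^ 2) t := by
      have : ContinuousAt γ t :=
        hcont.continuousAt (mem_nhds_iff.2 ⟨Set.Ioi 0, Set.Ioi_subset_Ici le_rfl, isOpen_Ioi, ht⟩)
      exact this.pow 2
    have hint : IntervalIntegrable (fun s => γ s ^ 2) volume 0 t :=
      intervalIntegrable_iff.2 (by rw [Set.uIoc_of_le ht.le]; exact hIntIoc 0 t le_rfl)
    have h1 : HasDerivAt (fun u => ∫ s in (0:ℝ)..u, γ s ^ 2) (γ t ^ 2) t :=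
      intervalIntegral.integral_hasDerivAt_right hint hmeas hcontAt
    have h2 : HasDerivAt (fun u => Γ 0 - ∫ s in (0:ℝ)..u, γ s ^ 2) (-(γ t ^ 2)) t := by
      exact h1.const_sub (Γ 0)
    apply h2.congr_of_eventuallyEq
    filter_upwards [Ioi_mem_nhds ht] with u hu using hsplit u (le_of_lt hu)
  -- derivative of 1/Γ
  have hFderiv : ∀ t : ℝ, 0 < t → HasDerivAt (fun u => (Γ u)⁻¹) (γ t ^ 2 / Γ t ^ 2) t := by
    intro t ht
    have := (hΓderiv t ht).inv (ne_of_gt (hΓpos t ht.le))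
    exact this.congr_deriv (by rw [neg_neg])
  -- limit of the derivative
  have hflim : Tendsto (fun t => γ t ^ 2 / Γ t ^ 2) atTop (nhds (1 / κ ^ 2)) := by
    have h1 : Tendsto (fun t => (κ * γ t / Γ t) * (κ * γ t / Γ t) / κ ^ 2) atTop
        (nhds (1 * 1 / κ ^ 2)) := (hyp.mul hyp).div_const _
    rw [one_mul] at h1
    apply h1.congr'
    filter_upwards [eventually_ge_atTop (0:ℝ)] with t ht
    have hΓne : Γ t ≠ 0 := ne_of_gt (hΓpos t ht)
    field_simp
    try ring
  -- apply the key lemma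
  have hF : Tendsto (fun t => (Γ t)⁻¹ / t) atTop (nhds (1 / κ ^ 2)) := by
    apply tendsto_div_atTop_of_deriv _ hflim
    filter_upwards [eventually_gt_atTop (0:ℝ)] with t ht using hFderiv t ht
  have hκ2 : (1 / κ ^ 2 : ℝ) ≠ 0 := by positivity
  have hGt : Tendsto (fun t => Γ t * t) atTop (nhds (κ ^ 2)) := by
    have h1 := hF.inv₀ hκ2
    rw [one_div, inv_inv] at h1
    apply h1.congr'
    filter_upwards [eventually_gt_atTop (0:ℝ)] with t ht
    have hΓne : Γ t ≠ 0 := ne_of_gt (hΓpos t ht.le)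
    field_simp
    try ring
  constructor
  · have := hGt.div_const (κ ^ 2)
    rw [div_self (by positivity : (κ:ℝ) ^ 2 ≠ 0)] at this
    exact this
  · have h1 : Tendsto (fun t => (κ * γ t / Γ t) * (Γ t * t) / κ ^ 2) atTop
        (nhds (1 * κ ^ 2 / κ ^ 2)) := (hyp.mul hGt).div_const _
    rw [one_mul, div_self (by positivity : (κ:ℝ) ^ 2 ≠ 0)] at h1
    apply h1.congr'
    filter_upwards [eventually_ge_atTop (0:ℝ)] with t ht
    have hΓne : Γ t ≠ 0 := ne_of_gt (hΓpos t ht)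
    field_simp
    try ring
end

section
/- Let A be the real 4×4 matrix with rows (2α, 0, 0, −2), (0, 0, 0, −2), (0, 0, α, 2M), (−M², −M², −2M, α), where α, M > 0. Then the eigenvalues of A are α + a, α − a, α + i√(a²−α²), α − i√(a²−α²), where a = ((√(α⁴+16M²α²)+α²)/2)^{1/2}. -/
open Polynomial

/-- The eigenvalues (with multiplicity, i.e. the roots of the characteristic
polynomial) of the matrix
`A = !![2α, 0, 0, −2; 0, 0, 0, −2; 0, 0, α, 2M; −M², −M², −2M, α]`
are `α + a`, `α − a`, `α + i√(a²−α²)`, `α − i√(a²−α²)`,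
where `a = ((√(α⁴+16M²α²)+α²)/2)^{1/2}`. -/
theorem stmt18 (α M : ℝ) (hα : 0 < α) (hM : 0 < M)
    (a : ℝ) (ha : a = Real.sqrt ((Real.sqrt (α ^ 4 + 16 * M ^ 2 * α ^ 2) + α ^ 2) / 2))
    (A : Matrix (Fin 4) (Fin 4) ℂ)
    (hA : A = !![(2 * α : ℂ), 0, 0, -2;
                 0, 0, 0, -2;
                 0, 0, (α : ℂ), (2 * M : ℂ);
                 (-(M ^ 2) : ℂ), (-(M ^ 2) : ℂ), (-(2 * M) : ℂ), (α : ℂ)]) :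
    A.charpoly.roots =
      {((α : ℂ) + a), ((α : ℂ) - a),
        ((α : ℂ) + Complex.I * (Real.sqrt (a ^ 2 - α ^ 2) : ℝ)),
        ((α : ℂ) - Complex.I * (Real.sqrt (a ^ 2 - α ^ 2) : ℝ))} := by
  set b : ℝ := Real.sqrt (a ^ 2 - α ^ 2) with hb
  have hS : Real.sqrt (α ^ 4 + 16 * M ^ 2 * α ^ 2) ^ 2 = α ^ 4 + 16 * M ^ 2 * α ^ 2 :=
    Real.sq_sqrt (by positivity)
  have hSge : α ^ 2 ≤ Real.sqrt (α ^ 4 + 16 * M ^ 2 * α ^ 2) := by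
    have h1 : Real.sqrt (α ^ 4) = α ^ 2 := by
      rw [show α ^ 4 = (α ^ 2) ^ 2 by ring, Real.sqrt_sq (by positivity)]
    calc α ^ 2 = Real.sqrt (α ^ 4) := h1.symm
      _ ≤ _ := Real.sqrt_le_sqrt (by nlinarith)
  have ha2 : a ^ 2 = (Real.sqrt (α ^ 4 + 16 * M ^ 2 * α ^ 2) + α ^ 2) / 2 := by
    rw [ha, Real.sq_sqrt (by positivity)]
  have hge : α ^ 2 ≤ a ^ 2 := by rw [ha2]; linarith
  have hb2 : b ^ 2 = a ^ 2 - α ^ 2 := Real.sq_sqrt (by linarith)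
  have hkey : a ^ 2 * (a ^ 2 - α ^ 2) = 4 * M ^ 2 * α ^ 2 := by
    rw [ha2]; nlinarith [hS]
  have hb2c : (b : ℂ) ^ 2 = (a : ℂ) ^ 2 - (α : ℂ) ^ 2 := by exact_mod_cast hb2
  have hkeyc : (a : ℂ) ^ 2 * ((a : ℂ) ^ 2 - (α : ℂ) ^ 2) = 4 * (M : ℂ) ^ 2 * (α : ℂ) ^ 2 := by
    exact_mod_cast hkey
  have hCkey : (C (a : ℂ)) ^ 2 * ((C (a : ℂ)) ^ 2 - (C (α : ℂ)) ^ 2)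
      = 4 * (C (M : ℂ)) ^ 2 * (C (α : ℂ)) ^ 2 := by
    have := congrArg (C : ℂ → ℂ[X]) hkeyc
    simpa [map_mul, map_sub, map_pow, map_ofNat] using this
  have hprod2 : ((α : ℂ) + Complex.I * b) * ((α : ℂ) - Complex.I * b) = (a : ℂ) ^ 2 := by
    have hI := Complex.I_sq
    linear_combination (-(b : ℂ) ^ 2) * hI + hb2c
  have hcp : A.charpoly =
      ((({((α : ℂ) + a), ((α : ℂ) - a), ((α : ℂ) + Complex.I * b),
        ((α : ℂ) - Complex.I * b)} : Multiset ℂ)).map fun r => X - C r).prod := by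
    rw [Matrix.charpoly, hA]
    rw [show (({((α : ℂ) + a), ((α : ℂ) - a), ((α : ℂ) + Complex.I * b),
        ((α : ℂ) - Complex.I * b)} : Multiset ℂ)).map (fun r => X - C r)
        = {X - C ((α : ℂ) + a), X - C ((α : ℂ) - a), X - C ((α : ℂ) + Complex.I * b),
           X - C ((α : ℂ) - Complex.I * b)} from rfl]
    simp only [Multiset.insert_eq_cons, Multiset.prod_cons, Multiset.prod_singleton]
    have f2 : (X - C ((α : ℂ) + Complex.I * b)) * (X - C ((α : ℂ) - Complex.I * b))
        = X ^ 2 - C (2 * (α : ℂ)) * X + C ((a : ℂ) ^ 2) := by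
      rw [← hprod2]
      simp only [map_mul, map_add, map_sub, map_ofNat, C_mul]
      ring
    rw [show (X - C ((α : ℂ) - ↑a)) * ((X - C ((α : ℂ) + Complex.I * ↑b)) *
        (X - C ((α : ℂ) - Complex.I * ↑b))) = (X - C ((α : ℂ) - ↑a)) *
        (X ^ 2 - C (2 * (α : ℂ)) * X + C ((a : ℂ) ^ 2)) by rw [f2]]
    have hch : Matrix.charmatrix (!![(2 * α : ℂ), 0, 0, -2;
                 0, 0, 0, -2;
                 0, 0, (α : ℂ), (2 * M : ℂ);
                 (-(M ^ 2) : ℂ), (-(M ^ 2) : ℂ), (-(2 * M) : ℂ), (α : ℂ)]) =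
        !![X - C (2 * (α : ℂ)), 0, 0, C 2;
           0, X, 0, C 2;
           0, 0, X - C (α : ℂ), -C (2 * (M : ℂ));
           C ((M : ℂ) ^ 2), C ((M : ℂ) ^ 2), C (2 * (M : ℂ)), X - C (α : ℂ)] := by
      ext i j
      fin_cases i <;> fin_cases j <;>
        simp [Matrix.charmatrix_apply_eq, Matrix.charmatrix_apply_ne, map_neg, map_ofNat]
    rw [hch]
    simp [Matrix.det_succ_row_zero, Fin.sum_univ_succ, show (Fin.castSucc (2 : Fin 3)) = (2 : Fin 4) from rfl, show Fin.succAbove (3 : Fin 4) (2 : Fin 3) = (2 : Fin 4) from rfl]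
    simp only [map_mul, map_add, map_sub, map_neg, map_pow, map_ofNat, C_mul]
    ring_nf
    linear_combination hCkey
  rw [hcp, roots_multiset_prod_X_sub_C]
end
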